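/- Let v be as above: v(x) = x₁x₂ φ(−ln |x|²) for 0 < |x| ≤ 1/2, v(0) = 0, with φ C² satisfying φ → ∞, φ' → 0, φ'' → 0 at infinity. Then the Laplacian of v, given for x ≠ 0 by Δv(x) = −((2n+8)x₁x₂/|x|²) φ'(−ln|x|²) + (4x₁x₂/|x|²)(φ'(−ln|x|²) + φ''(−ln|x|²)), tends to 0 as |x| → 0; together with Δv(0) = 0 (computed from second partial derivatives along coordinate axes), Δv is continuous on the ball |x| ≤ 1/2. -/

import Mathlib

open Real Filter Metric Set Topology

lemma coord_abs_le_norm {n : ℕ} (x : EuclideanSpace ℝ (Fin n)) (i : Fin n) :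
    |x i| ≤ ‖x‖ := by
  rw [EuclideanSpace.norm_eq]
  have h1 : |x i| = Real.sqrt (‖x i‖ ^ 2) := by
    rw [Real.sqrt_sq_eq_abs]; simp [abs_abs]
  rw [h1]
  apply Real.sqrt_le_sqrt
  exact Finset.single_le_sum (f := fun j => ‖x j‖ ^ 2)
    (fun j _ => sq_nonneg _) (Finset.mem_univ i)

/-- The explicit formula for Δv tends to 0 as |x| → 0, so with Δv(0) = 0 the
Laplacian of v is continuous at the origin. -/
theorem stmt5 (n : ℕ) (hn : 2 ≤ n) (φ : ℝ → ℝ)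
    (hsmooth : ContDiffOn ℝ 2 φ (Set.Ioi 0))
    (hφ : Tendsto φ atTop atTop)
    (hφ' : Tendsto (deriv φ) atTop (nhds 0))
    (hφ'' : Tendsto (deriv (deriv φ)) atTop (nhds 0))
    (Δv : EuclideanSpace ℝ (Fin n) → ℝ)
    (hΔv0 : Δv 0 = 0)
    (hΔv : ∀ x : EuclideanSpace ℝ (Fin n), x ≠ 0 → ‖x‖ ≤ 1/2 →
      Δv x = -(((2 * n + 8) * x ⟨0, by omega⟩ * x ⟨1, by omega⟩) / ‖x‖ ^ (2:ℕ))
              * deriv φ (-Real.log (‖x‖ ^ (2:ℕ)))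
          + (4 * x ⟨0, by omega⟩ * x ⟨1, by omega⟩ / ‖x‖ ^ (2:ℕ))
              * (deriv φ (-Real.log (‖x‖ ^ (2:ℕ)))
                  + deriv (deriv φ) (-Real.log (‖x‖ ^ (2:ℕ))))) :
    Tendsto Δv (nhdsWithin 0 {0}ᶜ) (nhds 0) ∧ ContinuousAt Δv 0 := by
  set F := nhdsWithin (0 : EuclideanSpace ℝ (Fin n)) {0}ᶜ with hF
  -- the argument tends to atTop
  have hL : Tendsto (fun x : EuclideanSpace ℝ (Fin n) => -Real.log (‖x‖ ^ (2:ℕ)))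
      F atTop := by
    have h1 : Tendsto (fun x : EuclideanSpace ℝ (Fin n) => ‖x‖ ^ (2:ℕ)) F (𝓝[>] 0) := by
      rw [tendsto_nhdsWithin_iff]
      constructor
      · have : Tendsto (fun x : EuclideanSpace ℝ (Fin n) => ‖x‖ ^ (2:ℕ)) (𝓝 0) (𝓝 0) := by
          have := (continuous_norm.pow 2).tendsto (0 : EuclideanSpace ℝ (Fin n))
          have h' : Tendsto (fun x : EuclideanSpace ℝ (Fin n) => ‖x‖ ^ (2:ℕ)) (𝓝 0)
            (𝓝 (‖(0 : EuclideanSpace ℝ (Fin n))‖ ^ (2:ℕ))) := this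
          rwa [norm_zero, zero_pow two_ne_zero] at h'
        exact this.mono_left nhdsWithin_le_nhds
      · filter_upwards [self_mem_nhdsWithin] with x hx
        have : x ≠ 0 := hx
        have : (0:ℝ) < ‖x‖ := norm_pos_iff.mpr this
        exact pow_pos this 2
    have h2 : Tendsto Real.log (𝓝[>] (0:ℝ)) atBot := Real.tendsto_log_nhdsGT_zero
    exact tendsto_neg_atBot_atTop.comp (h2.comp h1)
  have hf : Tendsto (fun x : EuclideanSpace ℝ (Fin n) =>
      deriv φ (-Real.log (‖x‖ ^ (2:ℕ)))) F (𝓝 0) := hφ'.comp hL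
  have hg : Tendsto (fun x : EuclideanSpace ℝ (Fin n) =>
      deriv (deriv φ) (-Real.log (‖x‖ ^ (2:ℕ)))) F (𝓝 0) := hφ''.comp hL
  have key : Tendsto Δv F (𝓝 0) := by
    apply squeeze_zero_norm' (a := fun x : EuclideanSpace ℝ (Fin n) =>
      (2 * n + 8) * |deriv φ (-Real.log (‖x‖ ^ (2:ℕ)))|
        + 4 * (|deriv φ (-Real.log (‖x‖ ^ (2:ℕ)))|
          + |deriv (deriv φ) (-Real.log (‖x‖ ^ (2:ℕ)))|))
    · have hball : ∀ᶠ x : EuclideanSpace ℝ (Fin n) in F, ‖x‖ ≤ 1/2 := by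
        have : Metric.closedBall (0 : EuclideanSpace ℝ (Fin n)) (1/2) ∈ 𝓝 (0 : EuclideanSpace ℝ (Fin n)) :=
          Metric.closedBall_mem_nhds 0 (by norm_num)
        filter_upwards [nhdsWithin_le_nhds this] with x hx
        simpa [Metric.mem_closedBall, dist_zero_right] using hx
      filter_upwards [self_mem_nhdsWithin, hball] with x hx hx2
      have hxne : x ≠ 0 := hx
      rw [hΔv x hxne hx2]
      set a := x (⟨0, by omega⟩ : Fin n)
      set b := x (⟨1, by omega⟩ : Fin n)
      set f := deriv φ (-Real.log (‖x‖ ^ (2:ℕ)))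
      set g := deriv (deriv φ) (-Real.log (‖x‖ ^ (2:ℕ)))
      have hnorm : (0:ℝ) < ‖x‖ := norm_pos_iff.mpr hxne
      have hq : |a * b / ‖x‖ ^ (2:ℕ)| ≤ 1 := by
        rw [abs_div, abs_mul]
        rw [div_le_one (by positivity)]
        have ha := coord_abs_le_norm x ⟨0, by omega⟩
        have hb := coord_abs_le_norm x ⟨1, by omega⟩
        calc |a| * |b| ≤ ‖x‖ * ‖x‖ :=
              mul_le_mul ha hb (abs_nonneg _) (norm_nonneg _)
          _ = |‖x‖ ^ (2:ℕ)| := by rw [abs_of_nonneg (by positivity)]; ring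
      have key1 : |(-(((2 * n + 8) * a * b) / ‖x‖ ^ (2:ℕ))) * f| ≤ (2 * n + 8) * |f| := by
        rw [abs_mul, abs_neg]
        apply mul_le_mul_of_nonneg_right _ (abs_nonneg _)
        have : ((2 * n + 8) * a * b) / ‖x‖ ^ (2:ℕ) = (2 * n + 8) * (a * b / ‖x‖ ^ (2:ℕ)) := by
          ring
        rw [this, abs_mul]
        have h1 : |(2 * (n:ℝ) + 8)| = 2 * n + 8 := by
          rw [abs_of_nonneg]; positivity
        rw [h1]
        nlinarith [abs_nonneg (a * b / ‖x‖ ^ (2:ℕ))]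
      have key2 : |(4 * a * b / ‖x‖ ^ (2:ℕ)) * (f + g)| ≤ 4 * (|f| + |g|) := by
        rw [abs_mul]
        have : 4 * a * b / ‖x‖ ^ (2:ℕ) = 4 * (a * b / ‖x‖ ^ (2:ℕ)) := by ring
        rw [this, abs_mul]
        have h4 : |(4:ℝ)| = 4 := by norm_num
        rw [h4]
        have := abs_add_le f g
        nlinarith [abs_nonneg (a * b / ‖x‖ ^ (2:ℕ)), abs_nonneg (f + g)]
      calc ‖-(((2 * n + 8) * a * b) / ‖x‖ ^ (2:ℕ)) * f + (4 * a * b / ‖x‖ ^ (2:ℕ)) * (f + g)‖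
          ≤ |(-(((2 * n + 8) * a * b) / ‖x‖ ^ (2:ℕ))) * f| + |(4 * a * b / ‖x‖ ^ (2:ℕ)) * (f + g)| := by
            exact abs_add_le _ _
        _ ≤ (2 * n + 8) * |f| + 4 * (|f| + |g|) := add_le_add key1 key2
    · have h1 : Tendsto (fun x : EuclideanSpace ℝ (Fin n) =>
          |deriv φ (-Real.log (‖x‖ ^ (2:ℕ)))|) F (𝓝 0) := by
        simpa using hf.abs
      have h2 : Tendsto (fun x : EuclideanSpace ℝ (Fin n) =>
          |deriv (deriv φ) (-Real.log (‖x‖ ^ (2:ℕ)))|) F (𝓝 0) := by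
        simpa using hg.abs
      have := ((h1.const_mul ((2:ℝ) * n + 8)).add ((h1.add h2).const_mul 4))
      simpa using this
  refine ⟨key, ?_⟩
  have hpure : Tendsto Δv (pure (0 : EuclideanSpace ℝ (Fin n))) (𝓝 0) :=
    hΔv0 ▸ tendsto_pure_nhds Δv 0
  rw [ContinuousAt, hΔv0, ← nhdsNE_sup_pure (0 : EuclideanSpace ℝ (Fin n))]
  rw [tendsto_sup]
  exact ⟨key.mono_left (le_of_eq rfl), hpure⟩
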